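/- Let g_1, g_2 ∈ SL_n(ℂ) and let Y_1, Y_2 be strictly upper triangular n×n complex matrices. Suppose there exists x in the Iwahori subgroup 𝓑 such that g_1·Ȳ_1 = g_2·Ȳ_2·x in SL_n(F). Then b := g_2^{−1}g_1 is an upper triangular matrix in SL_n(ℂ) and Y_1 = b^{−1}·Y_2·b. (This is the injectivity of the map φ : T*(SL_n/B) → SL_n(F)/𝓑 given by φ(g,Y) = g·Ȳ mod 𝓑.) -/

import Mathlib

set_option synthInstance.maxHeartbeats 1000000
set_option maxHeartbeats 1000000


/-! Statement 3: injectivity of the map `φ : T*(SL_n/B) → SL_n(F)/𝓑`,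
`φ(g, Y) = g·Ȳ mod 𝓑`. -/

noncomputable section

noncomputable section

/-- The field of formal Laurent series over `ℂ`. -/
abbrev FF : Type := LaurentSeries ℂ

/-- The uniformizer `t` of `ℂ((t))`. -/
def tF : FF := HahnSeries.single (1 : ℤ) (1 : ℂ)

/-- An element of `F = ℂ((t))` is integral if it lies in `A = ℂ[[t]]`,
i.e. all coefficients of negative index vanish. -/
def Integral (x : FF) : Prop := ∀ m : ℤ, m < 0 → x.coeff m = 0

/-- Membership in `G₀ = SL_n(ℂ[[t]])`: all entries integral and determinant `1`. -/
def MemG0 {n : ℕ} (g : Matrix (Fin n) (Fin n) FF) : Prop :=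
  g.det = 1 ∧ ∀ i j : Fin n, Integral (g i j)

/-- Membership in the Iwahori subgroup `𝓑`: all entries integral, determinant `1`,
and the matrix of constant terms `h(0)` is upper triangular. -/
def MemIwahori {n : ℕ} (h : Matrix (Fin n) (Fin n) FF) : Prop :=
  h.det = 1 ∧ (∀ i j : Fin n, Integral (h i j)) ∧
    ∀ i j : Fin n, (j : ℕ) < (i : ℕ) → (h i j).coeff 0 = 0

/-- The element `κ = diag(t, t, …, t, t^{-(n-1)})` of `SL_n(F)`. -/
def kappaMat (n : ℕ) : Matrix (Fin n) (Fin n) FF :=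
  Matrix.diagonal fun i => if (i : ℕ) = n - 1 then tF ^ (-((n : ℤ) - 1)) else tF

/-- A complex matrix viewed as a matrix over `F = ℂ((t))`. -/
def liftC {n : ℕ} (Y : Matrix (Fin n) (Fin n) ℂ) : Matrix (Fin n) (Fin n) FF :=
  Y.map (algebraMap ℂ FF)

/-- For a nilpotent complex matrix `Y`, the element
`Ȳ = Id + t⁻¹Y + t⁻²Y² + ⋯ + t^{-(n-1)}Y^{n-1}` of `SL_n(F)`. -/
def Ybar {n : ℕ} (Y : Matrix (Fin n) (Fin n) ℂ) : Matrix (Fin n) (Fin n) FF :=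
  ∑ k ∈ Finset.range n, tF ^ (-(k : ℤ)) • liftC (Y ^ k)

namespace Stmt3Aux

lemma algC (r : ℂ) : (algebraMap ℂ FF) r = HahnSeries.single (0 : ℤ) r := by
  rw [HahnSeries.algebraMap_apply', PowerSeries.algebraMap_apply]
  simp [HahnSeries.ofPowerSeries_C, HahnSeries.C_apply]

lemma tF_pow (k : ℕ) : tF ^ k = HahnSeries.single (k : ℤ) (1 : ℂ) := by
  induction k with
  | zero => simpa using (HahnSeries.single_zero_one (Γ := ℤ) (R := ℂ)).symm
  | succ k ih =>
    rw [pow_succ, ih, tF, HahnSeries.single_mul_single, one_mul]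
    norm_num

lemma tF_zpow (z : ℤ) : tF ^ z = HahnSeries.single z (1 : ℂ) := by
  cases z with
  | ofNat k => rw [Int.ofNat_eq_coe, zpow_natCast, tF_pow]
  | negSucc k =>
    rw [zpow_negSucc, tF_pow]
    refine inv_eq_of_mul_eq_one_left ?_
    rw [HahnSeries.single_mul_single, one_mul]
    have : Int.negSucc k + ((k + 1 : ℕ) : ℤ) = 0 := by
      rw [Int.negSucc_eq]; push_cast; ring
    rw [this, HahnSeries.single_zero_one]

lemma liftC_mul {n : ℕ} (M N : Matrix (Fin n) (Fin n) ℂ) :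
    liftC (M * N) = liftC M * liftC N := by
  simpa [liftC] using
    (Matrix.map_mul (L := M) (M := N) (f := algebraMap ℂ FF))

lemma liftC_one {n : ℕ} : liftC (1 : Matrix (Fin n) (Fin n) ℂ) = 1 :=
  Matrix.map_one _ (map_zero _) (map_one _)

lemma liftC_zero {n : ℕ} : liftC (0 : Matrix (Fin n) (Fin n) ℂ) = 0 := by
  ext i j; simp [liftC]

lemma smul_zero' {n : ℕ} (c : FF) : c • (0 : Matrix (Fin n) (Fin n) FF) = 0 := by
  ext i j; simp [Matrix.smul_apply]

lemma one_smul' {n : ℕ} (M : Matrix (Fin n) (Fin n) FF) : (1 : FF) • M = M := by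
  ext i j; simp [Matrix.smul_apply]

lemma term_apply {n : ℕ} (z : ℤ) (M : Matrix (Fin n) (Fin n) ℂ) (i j : Fin n) :
    (tF ^ z • liftC M) i j = HahnSeries.single z (M i j) := by
  rw [Matrix.smul_apply, liftC, Matrix.map_apply, algC, smul_eq_mul, tF_zpow,
    HahnSeries.single_mul_single, add_zero, one_mul]

lemma tF_ne : (tF : FF) ≠ 0 := by
  rw [tF]; exact HahnSeries.single_ne_zero one_ne_zero

lemma mul_term {n : ℕ} (z w : ℤ) (M N : Matrix (Fin n) (Fin n) ℂ) :
    (tF ^ z • liftC M) * (tF ^ w • liftC N) = tF ^ (z + w) • liftC (M * N) := by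
  rw [Matrix.smul_mul (tF ^ z) (liftC M) (tF ^ w • liftC N),
    Matrix.mul_smul (liftC M) (tF ^ w) (liftC N),
    smul_smul (tF ^ z) (tF ^ w) (liftC M * liftC N), ← zpow_add₀ tF_ne, liftC_mul]

lemma coeff_sum (s : Finset ℕ) (f : ℕ → FF) (m : ℤ) :
    (∑ k ∈ s, f k).coeff m = ∑ k ∈ s, (f k).coeff m := by
  classical
  induction s using Finset.induction_on with
  | empty => simp [HahnSeries.coeff_zero]
  | insert _ _ h ih =>
    rw [Finset.sum_insert h, Finset.sum_insert h, HahnSeries.coeff_add, ih]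

lemma pow_strictUpper {n : ℕ} (Y : Matrix (Fin n) (Fin n) ℂ)
    (hY : ∀ i j : Fin n, (j : ℕ) ≤ (i : ℕ) → Y i j = 0) :
    ∀ (k : ℕ) (i j : Fin n), (j : ℕ) < (i : ℕ) + k → (Y ^ k) i j = 0 := by
  intro k
  induction k with
  | zero =>
    intro i j h
    rw [pow_zero, Matrix.one_apply_ne]
    intro e
    rw [e] at h
    omega
  | succ k ih =>
    intro i j h
    rw [pow_succ, Matrix.mul_apply]
    refine Finset.sum_eq_zero fun l _ => ?_
    rcases lt_or_ge (l : ℕ) ((i : ℕ) + k) with hl | hl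
    · rw [ih i l hl, zero_mul]
    · rw [hY l j (by omega), mul_zero]

lemma pow_n_eq_zero {n : ℕ} (Y : Matrix (Fin n) (Fin n) ℂ)
    (hY : ∀ i j : Fin n, (j : ℕ) ≤ (i : ℕ) → Y i j = 0) : Y ^ n = 0 := by
  ext i j
  have hj := j.isLt
  exact pow_strictUpper Y hY n i j (by omega)

lemma Ybar_mul_inv {n : ℕ} (Y : Matrix (Fin n) (Fin n) ℂ) (hYn : Y ^ n = 0) :
    Ybar Y * (1 - tF ^ (-1 : ℤ) • liftC Y) = 1 := by
  rw [Ybar, Finset.sum_mul]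
  have hterm : ∀ k ∈ Finset.range n,
      (tF ^ (-(k : ℤ)) • liftC (Y ^ k)) * (1 - tF ^ (-1 : ℤ) • liftC Y)
        = (tF ^ (-(k : ℤ)) • liftC (Y ^ k))
          - tF ^ (-((k + 1 : ℕ) : ℤ)) • liftC (Y ^ (k + 1)) := by
    intro k _
    rw [mul_sub, mul_one, mul_term, ← pow_succ]
    congr 2
    push_cast
    ring
  rw [Finset.sum_congr rfl hterm,
    Finset.sum_range_sub' (fun k => tF ^ (-(k : ℤ)) • liftC (Y ^ k)) n]
  rw [hYn, liftC_zero, smul_zero', sub_zero, Nat.cast_zero, neg_zero, zpow_zero,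
    pow_zero, liftC_one, one_smul']

end Stmt3Aux

open Stmt3Aux in
/-- If `g₁·Ȳ₁ = g₂·Ȳ₂·x` for some `x` in the Iwahori subgroup `𝓑`,
with `g₁, g₂ ∈ SL_n(ℂ)` and `Y₁, Y₂` strictly upper triangular, then `b = g₂⁻¹g₁` is
upper triangular and `Y₁ = b⁻¹·Y₂·b`. -/
theorem stmt3 {n : ℕ} (g₁ g₂ : Matrix (Fin n) (Fin n) ℂ)
    (hg₁ : g₁.det = 1) (hg₂ : g₂.det = 1)
    (Y₁ Y₂ : Matrix (Fin n) (Fin n) ℂ)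
    (hY₁ : ∀ i j : Fin n, (j : ℕ) ≤ (i : ℕ) → Y₁ i j = 0)
    (hY₂ : ∀ i j : Fin n, (j : ℕ) ≤ (i : ℕ) → Y₂ i j = 0)
    (hx : ∃ x : Matrix (Fin n) (Fin n) FF, MemIwahori x ∧
      liftC g₁ * Ybar Y₁ = liftC g₂ * Ybar Y₂ * x) :
    (∀ i j : Fin n, (j : ℕ) < (i : ℕ) → (g₂⁻¹ * g₁) i j = 0) ∧
      Y₁ = (g₂⁻¹ * g₁)⁻¹ * Y₂ * (g₂⁻¹ * g₁) := by
  classical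
  obtain ⟨x, ⟨hxdet, hxint, hxtri⟩, heq⟩ := hx
  set b : Matrix (Fin n) (Fin n) ℂ := g₂⁻¹ * g₁ with hb
  set C : Matrix (Fin n) (Fin n) FF := 1 - tF ^ (-1 : ℤ) • liftC Y₂ with hC
  -- inverses over ℂ
  have hg₂inv : g₂⁻¹ * g₂ = 1 := Matrix.nonsing_inv_mul g₂ (by rw [hg₂]; exact isUnit_one)
  have hlinv : liftC (g₂⁻¹) * liftC g₂ = 1 := by
    rw [← liftC_mul, hg₂inv, liftC_one]
  have h2 : Ybar Y₂ * C = 1 := Ybar_mul_inv Y₂ (pow_n_eq_zero Y₂ hY₂)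
  have h2' : C * Ybar Y₂ = 1 := mul_eq_one_comm.mp h2
  have key : C * liftC (g₂⁻¹) * (liftC g₂ * Ybar Y₂) = 1 := by
    rw [mul_assoc, ← mul_assoc (liftC (g₂⁻¹)), hlinv, one_mul, h2']
  have hxeq : x = C * liftC (g₂⁻¹) * (liftC g₁ * Ybar Y₁) := by
    rw [heq, ← mul_assoc, key, one_mul]
  have hxeq2 : x = C * (liftC b * Ybar Y₁) := by
    rw [hxeq, hb, liftC_mul, mul_assoc, mul_assoc]
  have hS1 : liftC b * Ybar Y₁
      = ∑ k ∈ Finset.range n, tF ^ (-(k : ℤ)) • liftC (b * Y₁ ^ k) := by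
    rw [Ybar, Finset.mul_sum]
    exact Finset.sum_congr rfl fun k _ =>
      by rw [Matrix.mul_smul (liftC b) (tF ^ (-(k:ℤ))) (liftC (Y₁ ^ k)), ← liftC_mul]
  have hS2 : (tF ^ (-1 : ℤ) • liftC Y₂)
        * ∑ k ∈ Finset.range n, tF ^ (-(k : ℤ)) • liftC (b * Y₁ ^ k)
      = ∑ k ∈ Finset.range n, tF ^ (-(k : ℤ) - 1) • liftC (Y₂ * (b * Y₁ ^ k)) := by
    rw [Finset.mul_sum]
    refine Finset.sum_congr rfl fun k _ => ?_
    rw [mul_term]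
    congr 1
    ring
  have hexp : x = (∑ k ∈ Finset.range n, tF ^ (-(k : ℤ)) • liftC (b * Y₁ ^ k))
      - ∑ k ∈ Finset.range n, tF ^ (-(k : ℤ) - 1) • liftC (Y₂ * (b * Y₁ ^ k)) := by
    rw [hxeq2, hC, sub_mul, one_mul, hS1, hS2]
  have hco : ∀ (i j : Fin n) (m : ℤ), (x i j).coeff m =
      (∑ k ∈ Finset.range n, if m = -(k : ℤ) then (b * Y₁ ^ k) i j else 0)
      - ∑ k ∈ Finset.range n, if m = -(k : ℤ) - 1 then (Y₂ * (b * Y₁ ^ k)) i j else 0 := by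
    intro i j m
    rw [hexp, Matrix.sub_apply, HahnSeries.coeff_sub, Matrix.sum_apply, Matrix.sum_apply,
      coeff_sum, coeff_sum]
    congr 1 <;> refine Finset.sum_congr rfl fun k _ => ?_ <;>
      · rw [term_apply, HahnSeries.coeff_single]; convert rfl
  -- upper triangularity of b
  have htri : ∀ i j : Fin n, (j : ℕ) < (i : ℕ) → b i j = 0 := by
    intro i j hij
    have h0 := hxtri i j hij
    rw [hco i j 0] at h0
    have e1 : (∑ k ∈ Finset.range n, if (0 : ℤ) = -(k : ℤ) then (b * Y₁ ^ k) i j else 0)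
        = (b * Y₁ ^ 0) i j := by
      rw [Finset.sum_eq_single_of_mem 0 (Finset.mem_range.2 i.pos)
        (fun k _ hk => if_neg (by omega))]
      rw [if_pos (by norm_num)]
    have e2 : (∑ k ∈ Finset.range n, if (0 : ℤ) = -(k : ℤ) - 1
        then (Y₂ * (b * Y₁ ^ k)) i j else 0) = 0 :=
      Finset.sum_eq_zero fun k _ => if_neg (by omega)
    rw [e1, e2, sub_zero, pow_zero, mul_one] at h0
    exact h0
  have hkey : b * Y₁ = Y₂ * b := by
    rcases le_or_gt n 1 with hn | hn
    · have hY1z : Y₁ = 0 := by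
        ext i j
        exact hY₁ i j (by have := i.isLt; have := j.isLt; omega)
      have hY2z : Y₂ = 0 := by
        ext i j
        exact hY₂ i j (by have := i.isLt; have := j.isLt; omega)
      rw [hY1z, hY2z, mul_zero, zero_mul]
    · ext i j
      have h1 := hxint i j (-1) (by norm_num)
      rw [hco i j (-1)] at h1
      have e1 : (∑ k ∈ Finset.range n, if (-1 : ℤ) = -(k : ℤ) then (b * Y₁ ^ k) i j else 0)
          = (b * Y₁ ^ 1) i j := by
        rw [Finset.sum_eq_single_of_mem 1 (Finset.mem_range.2 hn)
          (fun k _ hk => if_neg (by omega))]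
        rw [if_pos (by norm_num)]
      have e2 : (∑ k ∈ Finset.range n, if (-1 : ℤ) = -(k : ℤ) - 1
          then (Y₂ * (b * Y₁ ^ k)) i j else 0) = (Y₂ * (b * Y₁ ^ 0)) i j := by
        rw [Finset.sum_eq_single_of_mem 0 (Finset.mem_range.2 (by omega))
          (fun k _ hk => if_neg (by omega))]
        rw [if_pos (by norm_num)]
      rw [e1, e2, pow_one, pow_zero, mul_one, sub_eq_zero] at h1
      exact h1
  refine ⟨htri, ?_⟩
  have hdetb : b.det = 1 := by
    rw [hb, Matrix.det_mul, Matrix.det_nonsing_inv, hg₂, hg₁]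
    simp
  have hbinv : b⁻¹ * b = 1 := Matrix.nonsing_inv_mul b (by rw [hdetb]; exact isUnit_one)
  calc Y₁ = 1 * Y₁ := (one_mul Y₁).symm
    _ = b⁻¹ * b * Y₁ := by rw [hbinv]
    _ = b⁻¹ * (b * Y₁) := by rw [mul_assoc]
    _ = b⁻¹ * (Y₂ * b) := by rw [hkey]
    _ = b⁻¹ * Y₂ * b := by rw [mul_assoc]

end
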